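/- Let k > 0 and define on M = (0,2) the metric g_u(v,v) := v² ln(u/(2−u))/(2k(u−1)) (with value v²/k at u = 1) and the energy E(u) := (1/2)(u ln u + (2−u) ln(2−u)), so DE(u)v = (v/2) ln(u/(2−u)). Then a differentiable curve u : [0,∞) → (0,2) satisfies g_{u(t)}(u'(t), v) + DE(u(t)) v = 0 for all v ∈ ℝ and all t > 0 if and only if u'(t) = −k(u(t) − 1) for all t > 0. -/

import Mathlib

open Real Set

theorem limit_gradient_flow_iff_linear_ODE
    (k : ℝ) (hk : 0 < k)
    (u : ℝ → ℝ) (hu : Differentiable ℝ u)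
    (hrange : ∀ t, u t ∈ Set.Ioo (0 : ℝ) 2)
    (g : ℝ → ℝ)
    (hg1 : g 1 = 1 / k)
    (hg : ∀ w : ℝ, w ≠ 1 → g w = Real.log (w / (2 - w)) / (2 * k * (w - 1))) :
    (∀ t : ℝ, 0 < t → ∀ v : ℝ,
        g (u t) * deriv u t * v + (v / 2) * Real.log (u t / (2 - u t)) = 0) ↔
    (∀ t : ℝ, 0 < t → deriv u t = -k * (u t - 1)) := by
  constructor
  · intro h t ht
    have h1 := h t ht 1
    obtain ⟨hw0, hw2⟩ := hrange t
    by_cases hw : u t = 1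
    · have hg' : g (u t) = 1 / k := by rw [hw, hg1]
      rw [hg', hw] at h1
      norm_num at h1
      have hd : deriv u t = 0 := by
        rcases h1 with h1 | h1
        · exact absurd h1 hk.ne'
        · exact h1
      rw [hd, hw]; ring
    · have hL : Real.log (u t / (2 - u t)) ≠ 0 := by
        intro h0
        rcases Real.log_eq_zero.mp h0 with h0 | h0 | h0
        · have : (0:ℝ) < u t / (2 - u t) := div_pos hw0 (by linarith)
          linarith
        · have hne2 : 2 - u t ≠ 0 := by linarith
          have h2 : u t = 2 - u t := by
            field_simp [hne2] at h0
            linarith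
          exact hw (by linarith)
        · have : (0:ℝ) < u t / (2 - u t) := div_pos hw0 (by linarith)
          linarith
      rw [hg (u t) hw] at h1
      have hne : 2 * k * (u t - 1) ≠ 0 := by
        have h1' : u t - 1 ≠ 0 := sub_ne_zero.mpr hw
        positivity
      field_simp at h1
      have h2 : Real.log (u t / (2 - u t)) * (2 * (deriv u t + k * (u t - 1))) = 0 := by
        linear_combination 2 * h1
      rcases mul_eq_zero.mp h2 with h3 | h3
      · exact absurd h3 hL
      · linarith
  · intro h t ht v
    rw [h t ht]
    obtain ⟨hw0, hw2⟩ := hrange t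
    by_cases hw : u t = 1
    · rw [hw, hg1]
      norm_num
    · rw [hg (u t) hw]
      have h1 : u t - 1 ≠ 0 := sub_ne_zero.mpr hw
      have hk' : k ≠ 0 := ne_of_gt hk
      field_simp
      ring
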